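/- The algebra A^♥ (the degree-bounded completion of a polynomial quantum algebra) is a Noetherian domain. -/

import Mathlib

noncomputable section

variable (K : Type*) [Field K] (σ : Type*) [Fintype σ]

/-- The weighted degree of a monomial, for generators of degrees `d j`. -/
def wdeg (d : σ → ℤ) (m : σ →₀ ℕ) : ℤ := m.sum fun j k => (k : ℤ) * d j

/-- `f` has all its monomials of weighted degree at most `c`. -/
def DegBounded (d : σ → ℤ) (f : MvPowerSeries σ K) (c : ℤ) : Prop :=
  ∀ m : σ →₀ ℕ, c < wdeg σ d m → MvPowerSeries.coeff (R := K) m f = 0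

/-- The homogeneous component of weighted degree `c` of a formal power series. -/
def wcomp (d : σ → ℤ) (c : ℤ) (f : MvPowerSeries σ K) : MvPowerSeries σ K :=
  fun m => if wdeg σ d m = c then MvPowerSeries.coeff (R := K) m f else 0


set_option linter.unusedSectionVars false
set_option linter.unusedVariables false
set_option maxHeartbeats 2000000
set_option synthInstance.maxHeartbeats 400000

variable {K σ}
variable {d : σ → ℤ}

lemma wdeg_add (p q : σ →₀ ℕ) : wdeg σ d (p + q) = wdeg σ d p + wdeg σ d q := by
  unfold wdeg
  apply Finsupp.sum_add_index' (by simp) (by intro a b c; push_cast; ring)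

lemma coeff_wcomp (c : ℤ) (f : MvPowerSeries σ K) (m : σ →₀ ℕ) :
    MvPowerSeries.coeff (R := K) m (wcomp K σ d c f) =
      if wdeg σ d m = c then MvPowerSeries.coeff (R := K) m f else 0 := rfl

lemma degBounded_wcomp (c : ℤ) (f : MvPowerSeries σ K) : DegBounded K σ d (wcomp K σ d c f) c := by
  intro m hm
  rw [coeff_wcomp, if_neg (by omega)]

lemma wcomp_eq_zero_of_ne {c : ℤ} {f : MvPowerSeries σ K} {m : σ →₀ ℕ}
    (h : wdeg σ d m ≠ c) : MvPowerSeries.coeff (R := K) m (wcomp K σ d c f) = 0 := by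
  rw [coeff_wcomp, if_neg h]

lemma wcomp_eq_self {c : ℤ} {f : MvPowerSeries σ K}
    (h : ∀ m, wdeg σ d m ≠ c → MvPowerSeries.coeff (R := K) m f = 0) : wcomp K σ d c f = f := by
  apply MvPowerSeries.ext; intro m
  rw [coeff_wcomp]
  by_cases hm : wdeg σ d m = c
  · rw [if_pos hm]
  · rw [if_neg hm, h m hm]

lemma wcomp_wcomp (c : ℤ) (f : MvPowerSeries σ K) :
    wcomp K σ d c (wcomp K σ d c f) = wcomp K σ d c f := by
  apply MvPowerSeries.ext; intro m
  rw [coeff_wcomp, coeff_wcomp]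
  by_cases h : wdeg σ d m = c <;> simp [h]

lemma wcomp_add (c : ℤ) (f g : MvPowerSeries σ K) :
    wcomp K σ d c (f + g) = wcomp K σ d c f + wcomp K σ d c g := by
  apply MvPowerSeries.ext; intro m
  rw [map_add, coeff_wcomp, coeff_wcomp, coeff_wcomp, map_add]
  by_cases h : wdeg σ d m = c <;> simp [h]

lemma wcomp_sub (c : ℤ) (f g : MvPowerSeries σ K) :
    wcomp K σ d c (f - g) = wcomp K σ d c f - wcomp K σ d c g := by
  apply MvPowerSeries.ext; intro m
  rw [map_sub, coeff_wcomp, coeff_wcomp, coeff_wcomp, map_sub]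
  by_cases h : wdeg σ d m = c <;> simp [h]

lemma wcomp_sum {α : Type*} (c : ℤ) (s : Finset α) (F : α → MvPowerSeries σ K) :
    wcomp K σ d c (∑ a ∈ s, F a) = ∑ a ∈ s, wcomp K σ d c (F a) := by
  classical
  induction s using Finset.induction with
  | empty =>
    apply MvPowerSeries.ext; intro m
    rw [coeff_wcomp]
    simp
  | insert a s h ih => rw [Finset.sum_insert h, Finset.sum_insert h, wcomp_add, ih]

lemma degBounded_mono {c c' : ℤ} (h : c ≤ c') {f : MvPowerSeries σ K}
    (hf : DegBounded K σ d f c) : DegBounded K σ d f c' :=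
  fun m hm => hf m (lt_of_le_of_lt h hm)

lemma degBounded_sub {c : ℤ} {f g : MvPowerSeries σ K}
    (hf : DegBounded K σ d f c) (hg : DegBounded K σ d g c) : DegBounded K σ d (f - g) c := by
  intro m hm
  rw [map_sub, hf m hm, hg m hm, sub_zero]

lemma degBounded_sum {α : Type*} {c : ℤ} (s : Finset α) {F : α → MvPowerSeries σ K}
    (h : ∀ a ∈ s, DegBounded K σ d (F a) c) : DegBounded K σ d (∑ a ∈ s, F a) c := by
  intro m hm
  rw [map_sum]
  exact Finset.sum_eq_zero fun a ha => h a ha m hm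

lemma degBounded_of_wcomp_eq_zero {c : ℤ} {f : MvPowerSeries σ K}
    (hb : DegBounded K σ d f c) (h0 : wcomp K σ d c f = 0) : DegBounded K σ d f (c - 1) := by
  intro m hm
  rcases lt_or_eq_of_le (by omega : c ≤ wdeg σ d m) with h | h
  · exact hb m h
  · have := congrFun h0 m
    simpa [wcomp, h.symm] using this.trans (map_zero (MvPowerSeries.coeff (R := K) m))

/-- top component is multiplicative -/
lemma mul_degBounded_wcomp {c e : ℤ} {f g : MvPowerSeries σ K}
    (hf : DegBounded K σ d f c) (hg : DegBounded K σ d g e) :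
    DegBounded K σ d (f * g) (c + e) ∧
      wcomp K σ d (c + e) (f * g) = wcomp K σ d c f * wcomp K σ d e g := by
  classical
  constructor
  · intro m hm
    rw [MvPowerSeries.coeff_mul]
    apply Finset.sum_eq_zero
    rintro ⟨p, q⟩ hpq
    rw [Finset.HasAntidiagonal.mem_antidiagonal] at hpq
    by_cases hp : c < wdeg σ d p
    · rw [hf p hp, zero_mul]
    · have hq : e < wdeg σ d q := by
        have := wdeg_add (d := d) p q
        rw [hpq] at this
        omega
      rw [hg q hq, mul_zero]
  · apply MvPowerSeries.ext; intro m
    rw [coeff_wcomp]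
    rw [show MvPowerSeries.coeff (R := K) m (wcomp K σ d c f * wcomp K σ d e g) =
        ∑ pq ∈ Finset.HasAntidiagonal.antidiagonal m, MvPowerSeries.coeff (R := K) pq.1 (wcomp K σ d c f) *
          MvPowerSeries.coeff (R := K) pq.2 (wcomp K σ d e g) from MvPowerSeries.coeff_mul ..]
    by_cases hm : wdeg σ d m = c + e
    · rw [if_pos hm, MvPowerSeries.coeff_mul]
      apply Finset.sum_congr rfl
      rintro ⟨p, q⟩ hpq
      rw [Finset.HasAntidiagonal.mem_antidiagonal] at hpq
      have hsum : wdeg σ d p + wdeg σ d q = c + e := by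
        rw [← wdeg_add, hpq, hm]
      by_cases hp : MvPowerSeries.coeff (R := K) p f = 0
      · rw [hp, zero_mul, coeff_wcomp]
        split <;> simp [hp]
      by_cases hq : MvPowerSeries.coeff (R := K) q g = 0
      · rw [hq, mul_zero, coeff_wcomp, coeff_wcomp]
        split <;> split <;> simp [hq]
      have hpc : wdeg σ d p = c := by
        have h1 : ¬ c < wdeg σ d p := fun h => hp (hf p h)
        have h2 : ¬ e < wdeg σ d q := fun h => hq (hg q h)
        omega
      have hqe : wdeg σ d q = e := by omega
      rw [coeff_wcomp, coeff_wcomp, if_pos hpc, if_pos hqe]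
    · rw [if_neg hm]
      symm
      apply Finset.sum_eq_zero
      rintro ⟨p, q⟩ hpq
      rw [Finset.HasAntidiagonal.mem_antidiagonal] at hpq
      rw [coeff_wcomp, coeff_wcomp]
      split
      · split
        · exfalso
          apply hm
          rw [← hpq, wdeg_add]
          omega
        · rw [mul_zero]
      · rw [zero_mul]

/-- pulling a homogeneous factor out of a component -/
lemma wcomp_mul_homog {c e : ℤ} {h t : MvPowerSeries σ K}
    (ht : ∀ m, wdeg σ d m ≠ e → MvPowerSeries.coeff (R := K) m t = 0) :
    wcomp K σ d c (h * t) = wcomp K σ d (c - e) h * t := by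
  classical
  apply MvPowerSeries.ext; intro m
  rw [coeff_wcomp]
  rw [show MvPowerSeries.coeff (R := K) m (wcomp K σ d (c - e) h * t) =
      ∑ pq ∈ Finset.HasAntidiagonal.antidiagonal m, MvPowerSeries.coeff (R := K) pq.1 (wcomp K σ d (c - e) h) *
        MvPowerSeries.coeff (R := K) pq.2 t from MvPowerSeries.coeff_mul ..]
  by_cases hm : wdeg σ d m = c
  · rw [if_pos hm, MvPowerSeries.coeff_mul]
    apply Finset.sum_congr rfl
    rintro ⟨p, q⟩ hpq
    rw [Finset.HasAntidiagonal.mem_antidiagonal] at hpq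
    by_cases hq : MvPowerSeries.coeff (R := K) q t = 0
    · rw [hq, mul_zero, mul_zero]
    have hqe : wdeg σ d q = e := by_contra fun h' => hq (ht q h')
    have hpce : wdeg σ d p = c - e := by
      have := wdeg_add (d := d) p q
      rw [hpq, hm] at this
      omega
    rw [coeff_wcomp, if_pos hpce]
  · rw [if_neg hm]
    symm
    apply Finset.sum_eq_zero
    rintro ⟨p, q⟩ hpq
    rw [Finset.HasAntidiagonal.mem_antidiagonal] at hpq
    by_cases hq : MvPowerSeries.coeff (R := K) q t = 0
    · rw [hq, mul_zero]
    have hqe : wdeg σ d q = e := by_contra fun h' => hq (ht q h')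
    rw [coeff_wcomp]
    by_cases hp : wdeg σ d p = c - e
    · exfalso
      apply hm
      have := wdeg_add (d := d) p q
      rw [hpq] at this
      omega
    · rw [if_neg hp, zero_mul]

lemma span_fg_subset {R M : Type*} [Ring R] [AddCommGroup M] [Module R M] (S : Set M)
    (h : (Submodule.span R S).FG) :
    ∃ T : Finset M, ↑T ⊆ S ∧ Submodule.span R (T : Set M) = Submodule.span R S := by
  classical
  obtain ⟨F, hF⟩ := h
  have h1 : ∀ t ∈ F, ∃ Tt : Finset M, ↑Tt ⊆ S ∧ t ∈ Submodule.span R (Tt : Set M) := by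
    intro t ht
    exact Submodule.mem_span_finite_of_mem_span (hF ▸ Submodule.subset_span ht)
  set g : M → Finset M := fun t =>
    if ht : ∃ Tt : Finset M, ↑Tt ⊆ S ∧ t ∈ Submodule.span R (Tt : Set M) then ht.choose else ∅
    with hg
  refine ⟨F.biUnion g, ?_, ?_⟩
  · intro s hs
    simp only [Finset.coe_biUnion, Set.mem_iUnion] at hs
    obtain ⟨t, ht, hts⟩ := hs
    have hex := h1 t ht
    rw [hg] at hts
    simp only [dif_pos hex] at hts
    exact hex.choose_spec.1 hts
  · apply le_antisymm
    · apply Submodule.span_le.mpr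
      intro s hs
      simp only [Finset.coe_biUnion, Set.mem_iUnion] at hs
      obtain ⟨t, ht, hts⟩ := hs
      have hex := h1 t ht
      rw [hg] at hts
      simp only [dif_pos hex] at hts
      exact Submodule.subset_span (hex.choose_spec.1 hts)
    · rw [← hF]
      apply Submodule.span_le.mpr
      intro t ht
      have hex := h1 t ht
      have : t ∈ Submodule.span R ((g t : Finset M) : Set M) := by
        rw [hg]; simp only [dif_pos hex]; exact hex.choose_spec.2
      refine Submodule.span_mono ?_ this
      intro u hu
      simp only [Finset.coe_biUnion, Set.mem_iUnion]
      exact ⟨t, ht, hu⟩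

theorem master {B : Type*} [Ring B] [Algebra K B]
    (d : σ → ℤ)
    (ψ : B →ₗ[K] MvPowerSeries σ K) (hinj : Function.Injective ψ)
    (hbdd : ∀ x : B, ∃ c : ℤ, DegBounded K σ d (ψ x) c)
    (hsurj : ∀ f : MvPowerSeries σ K, (∃ c : ℤ, DegBounded K σ d f c) → ∃ x : B, ψ x = f)
    (hsymb : ∀ (x y : B) (c e : ℤ), DegBounded K σ d (ψ x) c → DegBounded K σ d (ψ y) e →
      DegBounded K σ d (ψ (x * y)) (c + e) ∧
      wcomp K σ d (c + e) (ψ (x * y)) = wcomp K σ d c (ψ x) * wcomp K σ d e (ψ y))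
    (P : Subalgebra K (MvPowerSeries σ K)) (hP : IsNoetherianRing P)
    (hmem : ∀ (f : MvPowerSeries σ K) (a : ℤ),
      (∀ m, wdeg σ d m ≠ a → MvPowerSeries.coeff (R := K) m f = 0) → f ∈ P) :
    IsNoetherianRing B := by
  classical
  haveI : IsNoetherian P P := hP
  -- the lift map
  set liftB : MvPowerSeries σ K → B := fun f =>
    if h : ∃ c, DegBounded K σ d f c then (hsurj f h).choose else 0 with hliftB
  have hlift : ∀ (f : MvPowerSeries σ K) (c : ℤ), DegBounded K σ d f c → ψ (liftB f) = f := by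
    intro f c hc
    rw [hliftB]
    simp only
    rw [dif_pos ⟨c, hc⟩]
    exact (hsurj f ⟨c, hc⟩).choose_spec
  -- the symbol ideal
  set SymbSet : Ideal B → Set P := fun I =>
    {s | ∃ v ∈ I, ∃ a : ℤ, DegBounded K σ d (ψ v) a ∧ (s : MvPowerSeries σ K) = wcomp K σ d a (ψ v)}
    with hSymbSet
  set Jmap : Ideal B → Ideal P := fun I => Ideal.span (SymbSet I) with hJmap
  have hJmono : ∀ {I I' : Ideal B}, I ≤ I' → Jmap I ≤ Jmap I' := by
    intro I I' h
    apply Ideal.span_mono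
    rintro s ⟨v, hv, a, ha, hs⟩
    exact ⟨v, h hv, a, ha, hs⟩
  -- key step: comparison of ideals with comparable symbol ideals
  have key : ∀ I I' : Ideal B, I ≤ I' → Jmap I' ≤ Jmap I → I' ≤ I := by
    intro I I' hII' hJ x hx
    -- a finite generating set of symbols for Jmap I
    obtain ⟨T, hTsub, hTspan⟩ := span_fg_subset (R := P) (SymbSet I) (IsNoetherian.noetherian _)
    have hT' : ∀ i : {t : P // t ∈ T}, ∃ v, v ∈ I ∧ ∃ a : ℤ, DegBounded K σ d (ψ v) a ∧
        ((i : P) : MvPowerSeries σ K) = wcomp K σ d a (ψ v) := by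
      intro i
      have := hTsub i.2
      rw [hSymbSet] at this
      obtain ⟨v, hv, a, ha, hs⟩ := this
      exact ⟨v, hv, a, ha, hs⟩
    choose y hy e he hs using hT'
    -- representation of symbols of elements of I'
    have hrep : ∀ (w : B) (a : ℤ), w ∈ I' ∧ DegBounded K σ d (ψ w) a →
        ∃ g : {t : P // t ∈ T} → MvPowerSeries σ K,
          (∀ i m, wdeg σ d m ≠ a - e i → MvPowerSeries.coeff (R := K) m (g i) = 0) ∧
          ∑ i, g i * wcomp K σ d (e i) (ψ (y i)) = wcomp K σ d a (ψ w) := by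
      rintro w a ⟨hw, hwa⟩
      have hSP : wcomp K σ d a (ψ w) ∈ P := hmem _ a (fun m hm => wcomp_eq_zero_of_ne hm)
      have hmemJ : (⟨wcomp K σ d a (ψ w), hSP⟩ : P) ∈ Ideal.span (T : Set P) := by
        show _ ∈ Submodule.span P (T : Set P)
        rw [hTspan]
        exact hJ (Ideal.subset_span ⟨w, hw, a, hwa, rfl⟩)
      have hrange : (T : Set P) = Set.range (fun i : {t : P // t ∈ T} => (i : P)) := by
        ext t; simp
      rw [hrange] at hmemJ
      obtain ⟨h, hh⟩ := (Submodule.mem_span_range_iff_exists_fun P).mp hmemJ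
      have hh' : ∑ i, ((h i : P) : MvPowerSeries σ K) * wcomp K σ d (e i) (ψ (y i))
          = wcomp K σ d a (ψ w) := by
        calc ∑ i, ((h i : P) : MvPowerSeries σ K) * wcomp K σ d (e i) (ψ (y i))
            = ∑ i, ((h i : P) : MvPowerSeries σ K) * ((i : P) : MvPowerSeries σ K) := by
              refine Finset.sum_congr rfl fun i _ => by rw [← hs i]
          _ = ((∑ i, h i • (i : P) : P) : MvPowerSeries σ K) := by
              rw [AddSubmonoidClass.coe_finset_sum]
              exact (Finset.sum_congr rfl fun i _ => by rw [smul_eq_mul]; rfl).symm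
          _ = ((⟨wcomp K σ d a (ψ w), hSP⟩ : P) : MvPowerSeries σ K) := by rw [hh]
          _ = wcomp K σ d a (ψ w) := rfl
      refine ⟨fun i => wcomp K σ d (a - e i) ((h i : P) : MvPowerSeries σ K), ?_, ?_⟩
      · intro i m hm
        exact wcomp_eq_zero_of_ne hm
      · calc ∑ i, wcomp K σ d (a - e i) ((h i : P) : MvPowerSeries σ K) *
              wcomp K σ d (e i) (ψ (y i))
            = ∑ i, wcomp K σ d a (((h i : P) : MvPowerSeries σ K) *
              wcomp K σ d (e i) (ψ (y i))) := by
              refine Finset.sum_congr rfl fun i _ => ?_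
              rw [wcomp_mul_homog (fun m hm => wcomp_eq_zero_of_ne hm)]
          _ = wcomp K σ d a (∑ i, ((h i : P) : MvPowerSeries σ K) *
              wcomp K σ d (e i) (ψ (y i))) := (wcomp_sum _ _ _).symm
          _ = wcomp K σ d a (wcomp K σ d a (ψ w)) := by rw [hh']
          _ = wcomp K σ d a (ψ w) := wcomp_wcomp _ _
    -- the successive approximation
    obtain ⟨c, hc⟩ := hbdd x
    set chooseG : B → ℤ → {t : P // t ∈ T} → MvPowerSeries σ K := fun w a =>
      if h : w ∈ I' ∧ DegBounded K σ d (ψ w) a then (hrep w a h).choose else 0 with hchooseG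
    set rem : ℕ → B := fun n =>
      Nat.rec x (fun n w => w - ∑ i, liftB (chooseG w (c - n) i) * y i) n with hrem
    have rem0 : rem 0 = x := rfl
    have remS : ∀ n : ℕ, rem (n + 1) = rem n - ∑ i, liftB (chooseG (rem n) (c - n) i) * y i :=
      fun n => rfl
    set g : ℕ → {t : P // t ∈ T} → MvPowerSeries σ K := fun n => chooseG (rem n) (c - n) with hg
    have gspec : ∀ n : ℕ, (rem n ∈ I' ∧ DegBounded K σ d (ψ (rem n)) (c - n)) →
        (∀ i m, wdeg σ d m ≠ (c - n) - e i → MvPowerSeries.coeff (R := K) m (g n i) = 0) ∧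
        ∑ i, g n i * wcomp K σ d (e i) (ψ (y i)) = wcomp K σ d (c - n) (ψ (rem n)) := by
      intro n h
      have hgn : g n = (hrep (rem n) (c - n) h).choose := by
        rw [hg]
        simp only [hchooseG]
        rw [dif_pos h]
      rw [hgn]
      exact (hrep (rem n) (c - n) h).choose_spec
    -- the invariant
    have inv : ∀ n : ℕ, rem n ∈ I' ∧ DegBounded K σ d (ψ (rem n)) (c - n) := by
      intro n
      induction n with
      | zero => exact ⟨hx, by rw [rem0]; simpa using hc⟩
      | succ n ih =>
        obtain ⟨hgsupp, hgsum⟩ := gspec n ih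
        have hgb : ∀ i, DegBounded K σ d (g n i) ((c - n) - e i) := by
          intro i m hm
          exact hgsupp i m (by omega)
        have hψg : ∀ i, ψ (liftB (g n i)) = g n i := fun i => hlift _ _ (hgb i)
        have hprod : ∀ i, DegBounded K σ d (ψ (liftB (g n i) * y i)) (c - n) ∧
            wcomp K σ d (c - n) (ψ (liftB (g n i) * y i)) =
              g n i * wcomp K σ d (e i) (ψ (y i)) := by
          intro i
          have h2 := hsymb (liftB (g n i)) (y i) ((c - n) - e i) (e i)
            (by rw [hψg]; exact hgb i) (he i)
          rw [hψg, sub_add_cancel, wcomp_eq_self (fun m hm => hgsupp i m hm)] at h2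
          exact h2
        constructor
        · rw [remS]
          exact I'.sub_mem ih.1 (I'.sum_mem fun i _ => hII' (Ideal.mul_mem_left I _ (hy i)))
        · have hb1 : DegBounded K σ d (ψ (rem (n + 1))) (c - n) := by
            rw [remS, map_sub, map_sum]
            exact degBounded_sub ih.2 (degBounded_sum _ fun i _ => (hprod i).1)
          have h0 : wcomp K σ d (c - n) (ψ (rem (n + 1))) = 0 := by
            rw [remS, map_sub, map_sum, wcomp_sub, wcomp_sum,
              Finset.sum_congr rfl (fun i _ => (hprod i).2), hgsum, sub_self]
          have hfin := degBounded_of_wcomp_eq_zero hb1 h0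
          have hcast : c - ((n : ℕ) + 1 : ℕ) = c - n - 1 := by push_cast; ring
          rw [hcast]
          exact hfin
    have hgsupp : ∀ (n : ℕ) i m, wdeg σ d m ≠ (c - n) - e i →
        MvPowerSeries.coeff (R := K) m (g n i) = 0 := fun n => (gspec n (inv n)).1
    have hgbd : ∀ (n : ℕ) i, DegBounded K σ d (g n i) (c - n - e i) := by
      intro n i m hm
      exact hgsupp n i m (by omega)
    -- the partial-sum identity
    have xrem : ∀ n : ℕ, x - rem n = ∑ i, (∑ k ∈ Finset.range n, liftB (g k i)) * y i := by
      intro n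
      induction n with
      | zero => simp [rem0]
      | succ n ih =>
        have : x - rem (n + 1) = (x - rem n) + ∑ i, liftB (g n i) * y i := by
          rw [remS]
          have : chooseG (rem n) (c - n) = g n := by rw [hg]
          rw [this]
          abel
        rw [this, ih, ← Finset.sum_add_distrib]
        refine Finset.sum_congr rfl fun i _ => ?_
        rw [Finset.sum_range_succ, add_mul]
    -- the limit coefficient series
    set G : {t : P // t ∈ T} → MvPowerSeries σ K := fun i =>
      fun m => MvPowerSeries.coeff (R := K) m (g ((c - e i - wdeg σ d m).toNat) i) with hG
    have hGcoeff : ∀ i m, MvPowerSeries.coeff (R := K) m (G i) =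
        MvPowerSeries.coeff (R := K) m (g ((c - e i - wdeg σ d m).toNat) i) := fun i m => rfl
    have hGsub : ∀ i (n : ℕ) (m : σ →₀ ℕ), (c - e i - n : ℤ) < wdeg σ d m →
        MvPowerSeries.coeff (R := K) m (G i) =
          MvPowerSeries.coeff (R := K) m (∑ k ∈ Finset.range n, g k i) := by
      intro i n m hm
      rw [map_sum, hGcoeff]
      by_cases h1 : c - e i < wdeg σ d m
      · rw [hgsupp _ i m (by
          have := Int.self_le_toNat (c - e i - wdeg σ d m)
          omega)]
        symm
        apply Finset.sum_eq_zero
        intro k hk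
        apply hgsupp k i m
        have : (0 : ℤ) ≤ (k : ℤ) := Int.natCast_nonneg k
        omega
      · have hk0 : ((c - e i - wdeg σ d m).toNat : ℤ) = c - e i - wdeg σ d m :=
          Int.toNat_of_nonneg (by omega)
        have hk0n : (c - e i - wdeg σ d m).toNat < n := by omega
        rw [Finset.sum_eq_single_of_mem _ (Finset.mem_range.mpr hk0n)]
        intro k hk hne
        apply hgsupp k i m
        intro hcon
        apply hne
        have : (k : ℤ) = c - e i - wdeg σ d m := by omega
        omega
    have hGbdd : ∀ i, DegBounded K σ d (G i) (c - e i) := by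
      intro i m hm
      rw [hGsub i 0 m (by push_cast; omega)]
      simp
    have hGpart : ∀ i (n : ℕ),
        DegBounded K σ d (G i - ∑ k ∈ Finset.range n, g k i) (c - e i - n) := by
      intro i n m hm
      rw [map_sub, hGsub i n m hm, sub_self]
    -- conclusion
    suffices hxz : x = ∑ i, liftB (G i) * y i by
      rw [hxz]
      exact I.sum_mem fun i _ => Ideal.mul_mem_left I _ (hy i)
    have hsplit : ∀ (n : ℕ) i, liftB (G i) =
        (∑ k ∈ Finset.range n, liftB (g k i)) + liftB (G i - ∑ k ∈ Finset.range n, g k i) := by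
      intro n i
      apply hinj
      rw [map_add, hlift (G i) _ (hGbdd i), hlift _ _ (hGpart i n), map_sum]
      rw [Finset.sum_congr rfl (fun k _ => hlift (g k i) _ (hgbd k i))]
      ring
    have hzero : x - ∑ i, liftB (G i) * y i = 0 := by
      apply hinj
      rw [map_zero]
      apply MvPowerSeries.ext
      intro m
      rw [map_zero]
      set n : ℕ := (c - wdeg σ d m).toNat + 1 with hn
      have hcn : (c : ℤ) - n < wdeg σ d m := by
        have := Int.self_le_toNat (c - wdeg σ d m)
        push_cast
        omega
      have hdec : x - ∑ i, liftB (G i) * y i =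
          rem n - ∑ i, liftB (G i - ∑ k ∈ Finset.range n, g k i) * y i := by
        have h1 : ∑ i, liftB (G i) * y i = (x - rem n) +
            ∑ i, liftB (G i - ∑ k ∈ Finset.range n, g k i) * y i := by
          rw [xrem n, ← Finset.sum_add_distrib]
          refine Finset.sum_congr rfl fun i _ => ?_
          rw [← add_mul, ← hsplit n i]
        rw [h1]
        abel
      rw [hdec, map_sub, map_sum, map_sub, map_sum]
      have h2 : MvPowerSeries.coeff (R := K) m (ψ (rem n)) = 0 := (inv n).2 m hcn
      rw [h2]
      have h3 : ∀ i, MvPowerSeries.coeff (R := K) m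
          (ψ (liftB (G i - ∑ k ∈ Finset.range n, g k i) * y i)) = 0 := by
        intro i
        have hq : DegBounded K σ d (ψ (liftB (G i - ∑ k ∈ Finset.range n, g k i)))
            (c - e i - n) := by
          rw [hlift _ _ (hGpart i n)]
          exact hGpart i n
        have := (hsymb _ (y i) _ _ hq (he i)).1
        apply this
        have hcast : c - e i - n + e i = c - n := by ring
        rw [hcast]
        exact hcn
      rw [Finset.sum_congr rfl (fun i _ => h3 i)]
      simp
    have := sub_eq_zero.mp hzero
    exact this
  -- conclude Noetherianity from stabilization of symbol ideals
  rw [isNoetherianRing_iff, ← monotone_stabilizes_iff_noetherian]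
  intro f
  have hmono : Monotone (fun n => Jmap (f n)) := fun a b hab => hJmono (f.mono hab)
  obtain ⟨n, hn⟩ := (monotone_stabilizes_iff_noetherian.mpr hP) ⟨fun n => Jmap (f n), hmono⟩
  refine ⟨n, fun m hm => ?_⟩
  apply le_antisymm (f.mono hm)
  exact key (f n) (f m) (f.mono hm) (le_of_eq (hn m hm).symm)

theorem mvPowerSeries_noetherian (K : Type*) [Field K] (σ : Type*) [Fintype σ] :
    IsNoetherianRing (MvPowerSeries σ K) := by
  classical
  set d0 : σ → ℤ := fun _ => -1 with hd0
  have hwd : ∀ m : σ →₀ ℕ, wdeg σ d0 m = -((m.sum fun _ k => k : ℕ) : ℤ) := by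
    intro m
    show (m.sum fun j k => (k : ℤ) * d0 j) = _
    simp only [Finsupp.sum]
    push_cast
    rw [← Finset.sum_neg_distrib]
    exact Finset.sum_congr rfl fun j _ => by rw [hd0]; ring
  set φ : MvPolynomial σ K →ₐ[K] MvPowerSeries σ K :=
    MvPolynomial.coeToMvPowerSeries.algHom K with hφ
  have hφap : ∀ p : MvPolynomial σ K, φ p = ↑p := by
    intro p
    rw [hφ, MvPolynomial.coeToMvPowerSeries.algHom_apply,
      show algebraMap K K = RingHom.id K from rfl, MvPowerSeries.map_id]
    rfl
  have hPN : IsNoetherianRing φ.range :=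
    isNoetherianRing_of_surjective (MvPolynomial σ K) _ φ.rangeRestrict.toRingHom
      φ.rangeRestrict_surjective
  refine master d0 (LinearMap.id) (fun a b h => h)
    (fun x => ⟨0, fun m hm => ?_⟩) (fun f _ => ⟨f, rfl⟩)
    (fun x y c e hx hy => mul_degBounded_wcomp hx hy) φ.range hPN ?_
  · exfalso
    have := hwd m
    omega
  · intro f a hsupp
    set N : ℕ := (-a).toNat with hN
    set nbar : σ →₀ ℕ := Finsupp.equivFunOnFinite.symm (fun _ => N) with hnbar
    have hnbar_ap : ∀ j, nbar j = N := fun j => rfl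
    have hbound : ∀ m : σ →₀ ℕ, MvPowerSeries.coeff (R := K) m f ≠ 0 → m ≤ nbar := by
      intro m hm
      have hdeg : wdeg σ d0 m = a := by_contra fun h => hm (hsupp m h)
      have hsum : ((m.sum fun _ k => k : ℕ) : ℤ) = -a := by
        have := hwd m
        omega
      have hNZ : (N : ℤ) = -a := by
        rw [hN]
        rw [Int.toNat_of_nonneg (by omega)]
      rw [Finsupp.le_def]
      intro j
      have hj : m j ≤ m.sum fun _ k => k := by
        by_cases hj0 : j ∈ m.support
        · exact Finset.single_le_sum (fun _ _ => Nat.zero_le _) hj0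
        · simp [Finsupp.notMem_support_iff.mp hj0]
      rw [hnbar_ap j]
      omega
    refine ⟨∑ m ∈ Finset.Iic nbar, MvPolynomial.monomial m (MvPowerSeries.coeff (R := K) m f), ?_⟩
    show φ _ = f
    rw [hφap]
    apply MvPowerSeries.ext
    intro m
    rw [MvPolynomial.coeff_coe, MvPolynomial.coeff_sum]
    rw [Finset.sum_congr rfl (fun m' _ => MvPolynomial.coeff_monomial m m' _)]
    rw [Finset.sum_ite_eq' (Finset.Iic nbar) m (fun m' => MvPowerSeries.coeff (R := K) m' f)]
    by_cases hmIic : m ∈ Finset.Iic nbar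
    · rw [if_pos hmIic]
    · rw [if_neg hmIic]
      symm
      by_contra h
      exact hmIic (Finset.mem_Iic.mpr (hbound m h))

variable (K σ)

/-- Losev, Proposition 3.2.3: the algebra `A^♥` — the completion of a polynomial quantum algebra
consisting of all formal power series on the graded vector space `v*` whose homogeneous
components have degrees bounded from above, with product induced by a polynomial star-product
(so that the top-degree symbol is multiplicative) — is a Noetherian domain.  Here `B` is an
abstract algebra identified with `A^♥ ⊂ K[[v*]]` via `ψ`. -/
theorem stmt_10 (B : Type*) [Ring B] [Algebra K B] [Nontrivial B]
    (d : σ → ℤ) (hd : ∃ j, d j ≠ 0)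
    (ψ : B →ₗ[K] MvPowerSeries σ K) (hinj : Function.Injective ψ)
    (hone : ψ 1 = 1)
    (hbdd : ∀ x : B, ∃ c : ℤ, DegBounded K σ d (ψ x) c)
    (hsurj : ∀ f : MvPowerSeries σ K, (∃ c : ℤ, DegBounded K σ d f c) → ∃ x : B, ψ x = f)
    (hsymb : ∀ (x y : B) (c e : ℤ), DegBounded K σ d (ψ x) c → DegBounded K σ d (ψ y) e →
      DegBounded K σ d (ψ (x * y)) (c + e) ∧
      wcomp K σ d (c + e) (ψ (x * y)) = wcomp K σ d c (ψ x) * wcomp K σ d e (ψ y)) :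
    IsNoetherianRing B ∧ IsDomain B := by
  constructor
  · -- Noetherian
    have NP := mvPowerSeries_noetherian K σ
    have htop : IsNoetherianRing (⊤ : Subalgebra K (MvPowerSeries σ K)) := by
      refine isNoetherianRing_of_surjective (MvPowerSeries σ K) _
        ((Subalgebra.topEquiv (R := K) (A := MvPowerSeries σ K)).symm.toRingEquiv.toRingHom) ?_
      exact (Subalgebra.topEquiv (R := K) (A := MvPowerSeries σ K)).symm.surjective
    exact master d ψ hinj hbdd hsurj hsymb ⊤ htop (fun f a h => Algebra.mem_top)
  · -- Domain
    have hψ0 : ∀ z : B, ψ z = 0 → z = 0 := fun z h => hinj (by rw [h, map_zero])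
    have top : ∀ z : B, z ≠ 0 →
        ∃ c, DegBounded K σ d (ψ z) c ∧ wcomp K σ d c (ψ z) ≠ 0 := by
      intro z hz
      obtain ⟨bd, hbdz⟩ := hbdd z
      have hnem : ∃ m, MvPowerSeries.coeff (R := K) m (ψ z) ≠ 0 := by
        by_contra h
        push_neg at h
        exact hz (hψ0 z (MvPowerSeries.ext fun m => by rw [h m, map_zero]))
      obtain ⟨m1, hm1⟩ := hnem
      obtain ⟨c, hcP, hub⟩ := Int.exists_greatest_of_bdd
        (P := fun a => ∃ m, wdeg σ d m = a ∧ MvPowerSeries.coeff (R := K) m (ψ z) ≠ 0)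
        ⟨bd, by
          rintro aa ⟨m, hm, hne⟩
          by_contra hgt
          push_neg at hgt
          exact hne (hbdz m (by omega))⟩
        ⟨wdeg σ d m1, m1, rfl, hm1⟩
      refine ⟨c, fun m hm => ?_, fun h0 => ?_⟩
      · by_contra hne
        exact absurd (hub (wdeg σ d m) ⟨m, rfl, hne⟩) (by omega)
      · obtain ⟨m0, hm0, hm0ne⟩ := hcP
        apply hm0ne
        have := congrArg (MvPowerSeries.coeff (R := K) m0) h0
        rwa [coeff_wcomp, if_pos hm0, map_zero] at this
    haveI : NoZeroDivisors B := by
      constructor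
      intro u v huv
      by_contra hcon
      push_neg at hcon
      obtain ⟨hu, hv⟩ := hcon
      obtain ⟨ca, hca, hwa⟩ := top u hu
      obtain ⟨cb, hcb, hwb⟩ := top v hv
      have h2 := (hsymb u v ca cb hca hcb).2
      rw [huv, map_zero] at h2
      have hz0 : wcomp K σ d (ca + cb) (0 : MvPowerSeries σ K) = 0 := by
        apply MvPowerSeries.ext
        intro m
        rw [coeff_wcomp]
        simp
      rw [hz0] at h2
      exact mul_ne_zero hwa hwb h2.symm
    exact NoZeroDivisors.to_isDomain B


end
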